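/- Let $n \geq 2$ and let $U$ be the set of points of $\mathbb{D}^n$ on which all solutions of the Nevanlinna-Pick problem with nodes $(0,\dots,0), (1/2,\dots,1/2)$ and targets $0, 1/2$ agree. Then $U = \{(z,\dots,z) : z \in \mathbb{D}\}$. -/

import Mathlib

/-- The open unit polydisc in `ℂⁿ`. -/
def polydisc (n : ℕ) : Set (Fin n → ℂ) := {z | ∀ i, ‖z i‖ < 1}

/-- A solution of the Nevanlinna–Pick problem with nodes `(0,…,0), (1/2,…,1/2)` and
targets `0, 1/2`. -/
def IsSolution (n : ℕ) (F : (Fin n → ℂ) → ℂ) : Prop :=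
  DifferentiableOn ℂ F (polydisc n) ∧ (∀ z ∈ polydisc n, ‖F z‖ ≤ 1) ∧
    F (fun _ => 0) = 0 ∧ F (fun _ => (1 : ℂ) / 2) = 1 / 2

open Metric Set in
lemma diag_key {n : ℕ} {F : (Fin n → ℂ) → ℂ} (hF : IsSolution n F) {z : ℂ}
    (hz : ‖z‖ < 1) : F (fun _ => z) = z := by
  obtain ⟨hFd, hFb, hF0, hFh⟩ := hF
  set h : ℂ → ℂ := fun w => F (fun _ => w) with hh
  have hdm : MapsTo (fun (w : ℂ) (_ : Fin n) => w) (ball 0 1) (polydisc n) := by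
    intro w hw i
    simpa using mem_ball_zero_iff.mp hw
  have hd : DifferentiableOn ℂ h (ball 0 1) := by
    apply hFd.comp (f := fun (w : ℂ) (_ : Fin n) => w)
    · exact (differentiable_pi.mpr fun i => differentiable_id).differentiableOn
    · exact hdm
  have hb : ∀ w ∈ ball (0:ℂ) 1, ‖h w‖ ≤ 1 := fun w hw => hFb _ (hdm hw)
  have h0 : h 0 = 0 := hF0
  have hhalfmem : (1/2 : ℂ) ∈ ball (0:ℂ) 1 := by
    rw [mem_ball_zero_iff]; norm_num
  have hhalf : h (1/2) = 1/2 := hFh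
  set g : ℂ → ℂ := dslope h 0 with hg
  have hgd : DifferentiableOn ℂ g (ball 0 1) :=
    (Complex.differentiableOn_dslope (ball_mem_nhds _ one_pos)).mpr hd
  have hgb : ∀ w ∈ ball (0:ℂ) 1, ‖g w‖ ≤ 1 := by
    intro w hw
    refine le_of_forall_pos_le_add fun ε hε => ?_
    have hmaps : MapsTo h (ball 0 1) (ball (h 0) (1 + ε)) := by
      intro x hx
      rw [h0, mem_ball_zero_iff]
      exact lt_of_le_of_lt (hb x hx) (by linarith)
    have := Complex.norm_dslope_le_div_of_mapsTo_ball hd (hmaps.mono_right ball_subset_closedBall) hw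
    simpa using this
  have hg_half : g (1/2) = 1 := by
    rw [hg, dslope_of_ne _ (by norm_num : (1/2 : ℂ) ≠ 0)]
    rw [slope_def_field, hhalf, h0]
    norm_num
  have hmax : IsMaxOn (norm ∘ g) (ball (0:ℂ) 1) (1/2 : ℂ) := by
    intro x hx
    simp only [Function.comp_apply, Set.mem_setOf_eq, hg_half, norm_one]
    exact hgb x hx
  have hconst : Set.EqOn g (Function.const ℂ (g (1/2))) (ball 0 1) :=
    Complex.eqOn_of_isPreconnected_of_isMaxOn_norm (convex_ball 0 1).isPreconnected
      isOpen_ball hgd hhalfmem hmax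
  have hzball : z ∈ ball (0:ℂ) 1 := mem_ball_zero_iff.mpr hz
  have hgz : g z = 1 := by rw [hconst hzball, Function.const, hg_half]
  have := sub_smul_dslope h 0 z
  rw [sub_zero, h0, sub_zero] at this
  calc F (fun _ => z) = h z := rfl
    _ = z • g z := this.symm
    _ = z := by rw [hgz, smul_eq_mul, mul_one]

lemma proj_isSolution {n : ℕ} (i : Fin n) : IsSolution n (fun v => v i) := by
  refine ⟨?_, fun z hz => (hz i).le, rfl, rfl⟩
  exact (differentiable_pi.mp differentiable_id i).differentiableOn

theorem stmt1 (n : ℕ) (hn : 2 ≤ n) :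
    {w ∈ polydisc n | ∀ F G : (Fin n → ℂ) → ℂ, IsSolution n F → IsSolution n G → F w = G w}
      = {w : Fin n → ℂ | ∃ z : ℂ, ‖z‖ < 1 ∧ w = fun _ => z} := by
  ext w
  constructor
  · rintro ⟨hwp, hagree⟩
    have i0 : Fin n := ⟨0, by omega⟩
    refine ⟨w i0, hwp i0, funext fun i => ?_⟩
    exact hagree _ _ (proj_isSolution i) (proj_isSolution i0)
  · rintro ⟨z, hz, rfl⟩
    refine ⟨fun i => hz, fun F G hF hG => ?_⟩
    rw [diag_key hF hz, diag_key hG hz]
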